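/- For every involution σ of {1,…,n}, the rank matrix R_σ satisfies conditions (i), (ii) and (iii). -/

import Mathlib

open Matrix

/-- A matrix is strictly upper-triangular. -/
def StrictUpper {n : ℕ} (x : Matrix (Fin n) (Fin n) ℂ) : Prop :=
  ∀ a b : Fin n, b ≤ a → x a b = 0

/-- A matrix is (weakly) upper-triangular. -/
def UpperTri {n : ℕ} (x : Matrix (Fin n) (Fin n) ℂ) : Prop :=
  ∀ a b : Fin n, b < a → x a b = 0

/-- The orbit of a matrix under conjugation by invertible upper-triangular matrices. -/
def Borbit {n : ℕ} (x : Matrix (Fin n) (Fin n) ℂ) : Set (Matrix (Fin n) (Fin n) ℂ) :=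
  {y | ∃ b : Matrix (Fin n) (Fin n) ℂ, IsUnit b ∧ UpperTri b ∧ y = b * x * b⁻¹}

/-- A permutation is an involution. -/
def IsInvol {n : ℕ} (σ : Equiv.Perm (Fin n)) : Prop := σ * σ = 1

/-- The strictly upper-triangular part `N_σ` of the permutation matrix of `σ`. -/
def Nmat {n : ℕ} (σ : Equiv.Perm (Fin n)) : Matrix (Fin n) (Fin n) ℂ :=
  Matrix.of fun a b => if a < b ∧ σ a = b then (1 : ℂ) else 0

/-- The submatrix `π_{i,j}(x)` on rows and columns `i,…,j` (1-based), for `1 ≤ i ≤ j ≤ n`. -/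
def blk {n : ℕ} (x : Matrix (Fin n) (Fin n) ℂ) (i j : ℕ)
    (h1 : 1 ≤ i) (h2 : i ≤ j) (h3 : j ≤ n) :
    Matrix (Fin (j + 1 - i)) (Fin (j + 1 - i)) ℂ :=
  Matrix.of fun a b =>
    x ⟨i - 1 + a.1, by have := a.2; omega⟩ ⟨i - 1 + b.1, by have := b.2; omega⟩

/-- The rank matrix of `N_σ` (1-based indices, 0 outside the range `1 ≤ i < j ≤ n`). -/
noncomputable def Rfun {n : ℕ} (σ : Equiv.Perm (Fin n)) : ℕ → ℕ → ℕ := fun i j =>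
  if h : 1 ≤ i ∧ i < j ∧ j ≤ n then (blk (Nmat σ) i j h.1 h.2.1.le h.2.2).rank
  else 0

/-- The number of two-cycles of an involution. -/
def numCycles {n : ℕ} (σ : Equiv.Perm (Fin n)) : ℕ :=
  (Finset.univ.filter fun a : Fin n => a < σ a).card

/-- Evaluation of a polynomial in the matrix entries at a matrix. -/
noncomputable def evalMat {n : ℕ} (x : Matrix (Fin n) (Fin n) ℂ)
    (f : MvPolynomial (Fin n × Fin n) ℂ) : ℂ :=
  MvPolynomial.eval (fun p => x p.1 p.2) f

/-- The vanishing ideal of a set of matrices. -/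
noncomputable def vanishingIdeal {n : ℕ} (S : Set (Matrix (Fin n) (Fin n) ℂ)) :
    Ideal (MvPolynomial (Fin n × Fin n) ℂ) where
  carrier := {f | ∀ x ∈ S, evalMat x f = 0}
  add_mem' := by
    intro a b ha hb x hx
    simp only [evalMat, map_add] at *
    rw [ha x hx, hb x hx, add_zero]
  zero_mem' := by
    intro x hx
    simp [evalMat]
  smul_mem' := by
    intro c f hf x hx
    simp only [evalMat, smul_eq_mul, _root_.map_mul] at *
    rw [hf x hx, mul_zero]

/-- The Zariski closure of a set of matrices: the common zero set of its vanishing ideal. -/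
noncomputable def zclosure {n : ℕ} (S : Set (Matrix (Fin n) (Fin n) ℂ)) :
    Set (Matrix (Fin n) (Fin n) ℂ) :=
  {x | ∀ f ∈ vanishingIdeal S, evalMat x f = 0}

/-- The space of upper-triangular matrices commuting with a given matrix
(the Lie algebra of the stabilizer of `N` in `B`). -/
noncomputable def commUT {n : ℕ} (N : Matrix (Fin n) (Fin n) ℂ) :
    Submodule ℂ (Matrix (Fin n) (Fin n) ℂ) where
  carrier := {z | UpperTri z ∧ z * N = N * z}
  add_mem' := by
    rintro a b ⟨ha1, ha2⟩ ⟨hb1, hb2⟩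
    refine ⟨fun p q h => ?_, by rw [add_mul, mul_add, ha2, hb2]⟩
    simp [Matrix.add_apply, ha1 p q h, hb1 p q h]
  zero_mem' := ⟨fun p q h => rfl, by simp⟩
  smul_mem' := by
    rintro c a ⟨ha1, ha2⟩
    refine ⟨fun p q h => ?_, by rw [Matrix.smul_mul, Matrix.mul_smul, ha2]⟩
    simp [Matrix.smul_apply, ha1 p q h]


/-- Conditions (i)–(iii) on a (1-based) `n×n` natural-number matrix, entries outside
`{1,…,n}²` being read as `0`. -/
def RConds (n : ℕ) (R : ℕ → ℕ → ℕ) : Prop :=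
  (∀ i j, 1 ≤ i → i ≤ n → 1 ≤ j → j ≤ n → j ≤ i → R i j = 0) ∧
  (∀ i j, 1 ≤ i → i < j → j ≤ n →
    R (i + 1) j ≤ R i j ∧ R i j ≤ R (i + 1) j + 1 ∧
    R i (j - 1) ≤ R i j ∧ R i j ≤ R i (j - 1) + 1) ∧
  (∀ i j, 1 ≤ i → i < j → j ≤ n →
    R i j = R (i + 1) j + 1 → R i j = R i (j - 1) + 1 → R i j = R (i + 1) (j - 1) + 1 →
    ((∀ k, 1 ≤ k → k < j → R i k = R (i + 1) k) ∧
     (∀ k, j ≤ k → k ≤ n → R i k = R (i + 1) k + 1) ∧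
     (∀ k, i < k → k ≤ n → R k j = R k (j - 1)) ∧
     (∀ k, 1 ≤ k → k ≤ i → R k j = R k (j - 1) + 1) ∧
     (∀ k, 1 ≤ k → k ≤ n → R j k = R (j + 1) k ∧ R k i = R k (i - 1))))

namespace T4
variable {n : ℕ} (σ : Equiv.Perm (Fin n))

def pairSet (i j : ℕ) : Finset (Fin n) :=
  Finset.univ.filter fun a => a < σ a ∧ i ≤ a.val + 1 ∧ (σ a).val + 1 ≤ j

lemma mem_pairSet {i j : ℕ} {a : Fin n} :
    a ∈ pairSet σ i j ↔ a < σ a ∧ i ≤ a.val + 1 ∧ (σ a).val + 1 ≤ j := by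
  simp [pairSet]

noncomputable def cfun (i j : ℕ) : ℕ := (pairSet σ i j).card

theorem rank_blk (hσ : ∀ a, σ (σ a) = a) (i j : ℕ) (h1 : 1 ≤ i) (h2 : i ≤ j) (h3 : j ≤ n) :
    (blk (Nmat σ) i j h1 h2 h3).rank = cfun σ i j := by
  classical
  set m := j + 1 - i with hm
  set M := blk (Nmat σ) i j h1 h2 h3 with hMdef
  have hembed : ∀ p : Fin m, i - 1 + p.1 < n := fun p => by have := p.2; omega
  set e : Fin m → Fin n := fun p => ⟨i - 1 + p.1, hembed p⟩ with he
  have hval : ∀ p : Fin m, (e p).val = i - 1 + p.1 := fun p => rfl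
  have einj : Function.Injective e := by
    intro p q h
    have h' : i - 1 + p.1 = i - 1 + q.1 := congrArg Fin.val h
    exact Fin.ext (by omega)
  have hMapp : ∀ p q : Fin m, M p q
      = if e p < e q ∧ σ (e p) = e q then (1:ℂ) else 0 := fun p q => rfl
  have hτmem : ∀ r : Fin m, i ≤ (σ (e r)).val + 1 ∧ (σ (e r)).val + 1 ≤ j →
      (σ (e r)).val - (i - 1) < m := by intro r hr; omega
  set τ : Fin m → Fin m := fun r =>
    if h : i ≤ (σ (e r)).val + 1 ∧ (σ (e r)).val + 1 ≤ j
    then ⟨(σ (e r)).val - (i - 1), hτmem r h⟩ else r with hτ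
  have hτpos : ∀ r (h : i ≤ (σ (e r)).val + 1 ∧ (σ (e r)).val + 1 ≤ j),
      τ r = ⟨(σ (e r)).val - (i - 1), hτmem r h⟩ := by
    intro r h; simp only [hτ]; rw [dif_pos h]
  have hτneg : ∀ r, ¬(i ≤ (σ (e r)).val + 1 ∧ (σ (e r)).val + 1 ≤ j) → τ r = r := by
    intro r h; simp only [hτ]; rw [dif_neg h]
  have hτe : ∀ r (h : i ≤ (σ (e r)).val + 1 ∧ (σ (e r)).val + 1 ≤ j),
      e (τ r) = σ (e r) := by
    intro r h
    rw [hτpos r h]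
    exact Fin.ext (by rw [hval]; simp only []; omega)
  have hτinv : ∀ r, τ (τ r) = r := by
    intro r
    by_cases h : i ≤ (σ (e r)).val + 1 ∧ (σ (e r)).val + 1 ≤ j
    · have h2' : e (τ r) = σ (e r) := hτe r h
      have hστ : σ (e (τ r)) = e r := by rw [h2', hσ]
      have hcond : i ≤ (σ (e (τ r))).val + 1 ∧ (σ (e (τ r))).val + 1 ≤ j := by
        rw [hστ]
        have := r.2
        rw [hval]
        omega
      rw [hτpos (τ r) hcond]
      refine Fin.ext ?_
      simp only []
      rw [hστ, hval]
      omega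
    · rw [hτneg r h, hτneg r h]
  set d : Fin m → ℂ := fun p => if e p < σ (e p) ∧ (σ (e p)).val + 1 ≤ j then 1 else 0 with hd
  set P : Matrix (Fin m) (Fin m) ℂ := Matrix.of (fun q r => if q = τ r then 1 else 0) with hP
  have hMP : M * P = Matrix.diagonal d := by
    ext p r
    rw [Matrix.mul_apply]
    have hsum : ∀ q, M p q * P q r = if q = τ r then M p q else 0 := by
      intro q; by_cases hq : q = τ r <;> simp [hP, hq]
    rw [Finset.sum_congr rfl (fun q _ => hsum q), Finset.sum_ite_eq' Finset.univ (τ r) _]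
    simp only [Finset.mem_univ, if_true]
    by_cases hr : i ≤ (σ (e r)).val + 1 ∧ (σ (e r)).val + 1 ≤ j
    · have h2' : e (τ r) = σ (e r) := hτe r hr
      rw [hMapp, h2']
      by_cases hpr : p = r
      · subst hpr
        rw [Matrix.diagonal_apply_eq]
        simp [hd, hr.2, Nat.lt_of_succ_le hr.2]
      · rw [Matrix.diagonal_apply_ne _ hpr, if_neg]
        rintro ⟨-, h2''⟩
        exact hpr (einj (σ.injective h2''))
    · rw [hτneg r hr, hMapp]
      have hzero : ¬ (e p < e r ∧ σ (e p) = e r) := by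
        rintro ⟨hlt, hEq⟩
        apply hr
        have hre : σ (e r) = e p := by rw [← hEq, hσ]
        rw [hre, hval]
        have := p.2
        omega
      rw [if_neg hzero]
      by_cases hpr : p = r
      · subst hpr
        rw [Matrix.diagonal_apply_eq]
        simp only [hd]
        rw [if_neg]
        rintro ⟨hlt, hle⟩
        apply hr
        have hltv : (e p).val < (σ (e p)).val := hlt
        rw [hval] at hltv
        exact ⟨by omega, hle⟩
      · rw [Matrix.diagonal_apply_ne _ hpr]
  have hPP : P * P = (1 : Matrix (Fin m) (Fin m) ℂ) := by
    ext p r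
    rw [Matrix.mul_apply]
    have hsum : ∀ q, P p q * P q r = if q = τ r then P p q else 0 := by
      intro q; by_cases hq : q = τ r <;> simp [hP, hq]
    rw [Finset.sum_congr rfl (fun q _ => hsum q), Finset.sum_ite_eq' Finset.univ (τ r) _]
    simp only [Finset.mem_univ, if_true, hP, Matrix.of_apply, hτinv r, Matrix.one_apply]
  have hMD : M = Matrix.diagonal d * P := by
    rw [← hMP, Matrix.mul_assoc, hPP, Matrix.mul_one]
  have hrank : M.rank = (Matrix.diagonal d).rank := by
    apply le_antisymm
    · rw [hMD]; exact Matrix.rank_mul_le_left _ _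
    · rw [← hMP]; exact Matrix.rank_mul_le_left _ _
  rw [hrank, Matrix.rank_diagonal, Fintype.card_subtype]
  show (Finset.univ.filter fun p => d p ≠ 0).card = (pairSet σ i j).card
  apply Finset.card_bij (fun p _ => e p)
  · intro p hp
    simp only [Finset.mem_filter, Finset.mem_univ, true_and, hd] at hp
    rw [mem_pairSet]
    by_cases hc : e p < σ (e p) ∧ (σ (e p)).val + 1 ≤ j
    · exact ⟨hc.1, by rw [hval]; omega, hc.2⟩
    · exact absurd (if_neg hc) hp
  · intro p _ q _ h
    exact einj h
  · intro b hb
    rw [mem_pairSet] at hb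
    obtain ⟨hlt, hbi, hbj⟩ := hb
    have hltv : b.val < (σ b).val := hlt
    have hpm : b.val - (i - 1) < m := by omega
    refine ⟨⟨b.val - (i - 1), hpm⟩, ?_, ?_⟩
    · simp only [Finset.mem_filter, Finset.mem_univ, true_and, hd]
      have heb : e ⟨b.val - (i - 1), hpm⟩ = b :=
        Fin.ext (show i - 1 + (b.val - (i - 1)) = b.val by omega)
      rw [heb, if_pos ⟨hlt, hbj⟩]
      exact one_ne_zero
    · exact Fin.ext (show i - 1 + (b.val - (i - 1)) = b.val by omega)

lemma pairSet_mono_left {i i' j : ℕ} (h : i ≤ i') : pairSet σ i' j ⊆ pairSet σ i j := by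
  intro a ha
  rw [mem_pairSet] at ha ⊢
  exact ⟨ha.1, by omega, ha.2.2⟩

lemma pairSet_mono_right {i j j' : ℕ} (h : j' ≤ j) : pairSet σ i j' ⊆ pairSet σ i j := by
  intro a ha
  rw [mem_pairSet] at ha ⊢
  exact ⟨ha.1, ha.2.1, by omega⟩

lemma cfun_eq_zero {i j : ℕ} (h : j ≤ i) : cfun σ i j = 0 := by
  unfold cfun
  rw [Finset.card_eq_zero]
  ext a
  simp only [mem_pairSet, Finset.notMem_empty, iff_false]
  rintro ⟨h1, h2, h3⟩
  have : a.val < (σ a).val := h1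
  omega

lemma card_step {s t u : Finset (Fin n)} (hst : s \ t ⊆ u) (hu : u.card ≤ 1) :
    s.card ≤ t.card + 1 := by
  have h1 := Finset.card_le_card_sdiff_add_card (s := s) (t := t)
  have h2 := Finset.card_le_card hst
  omega

lemma cfun_row_step (i j : ℕ) : cfun σ i j ≤ cfun σ (i + 1) j + 1 := by
  apply card_step (u := Finset.univ.filter fun a : Fin n => a.val + 1 = i)
  · intro a ha
    rw [Finset.mem_sdiff, mem_pairSet, mem_pairSet] at ha
    simp only [Finset.mem_filter, Finset.mem_univ, true_and]
    obtain ⟨⟨h1, h2, h3⟩, h4⟩ := ha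
    by_contra hne
    exact h4 ⟨h1, by omega, h3⟩
  · rw [Finset.card_le_one]
    intro a ha b hb
    simp only [Finset.mem_filter, Finset.mem_univ, true_and] at ha hb
    exact Fin.ext (by omega)

lemma cfun_col_step (i j : ℕ) : cfun σ i j ≤ cfun σ i (j - 1) + 1 := by
  apply card_step (u := Finset.univ.filter fun a : Fin n => (σ a).val + 1 = j)
  · intro a ha
    rw [Finset.mem_sdiff, mem_pairSet, mem_pairSet] at ha
    simp only [Finset.mem_filter, Finset.mem_univ, true_and]
    obtain ⟨⟨h1, h2, h3⟩, h4⟩ := ha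
    by_contra hne
    exact h4 ⟨h1, h2, by omega⟩
  · rw [Finset.card_le_one]
    intro a ha b hb
    simp only [Finset.mem_filter, Finset.mem_univ, true_and] at ha hb
    have : σ a = σ b := Fin.ext (by omega)
    exact σ.injective this

lemma exists_of_card_eq {s t : Finset (Fin n)} (hts : t ⊆ s) (h : s.card = t.card + 1) :
    ∃ a, a ∈ s ∧ a ∉ t := by
  by_contra hc
  push_neg at hc
  have hsub : s ⊆ t := fun a ha => hc a ha
  have := Finset.card_le_card hsub
  omega

lemma card_eq_succ_of {s t : Finset (Fin n)} (hts : t ⊆ s) {a : Fin n} (ha : a ∈ s)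
    (hat : a ∉ t) (huniq : ∀ b ∈ s, b ∉ t → b = a) : s.card = t.card + 1 := by
  have hs : s = insert a t := by
    ext b
    constructor
    · intro hb
      by_cases hbt : b ∈ t
      · exact Finset.mem_insert_of_mem hbt
      · rw [huniq b hb hbt]; exact Finset.mem_insert_self a t
    · intro hb
      rcases Finset.mem_insert.mp hb with h | h
      · rw [h]; exact ha
      · exact hts h
  rw [hs, Finset.card_insert_of_notMem hat]

lemma two_le_card_diff {s t : Finset (Fin n)} (hts : t ⊆ s) {a b : Fin n} (hab : a ≠ b)
    (ha : a ∈ s) (hb : b ∈ s) (hat : a ∉ t) (hbt : b ∉ t) : t.card + 2 ≤ s.card := by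
  have h1 : insert a (insert b t) ⊆ s := by
    intro x hx
    rcases Finset.mem_insert.mp hx with h | h
    · rwa [h]
    rcases Finset.mem_insert.mp h with h' | h'
    · rwa [h']
    · exact hts h'
  have h2 := Finset.card_le_card h1
  rw [Finset.card_insert_of_notMem (by simp [Finset.mem_insert, hab, hat]),
      Finset.card_insert_of_notMem hbt] at h2
  omega


end T4

/-- the rank matrix of every involution satisfies conditions (i)–(iii). -/


theorem stmt4 (n : ℕ) (hn : 1 ≤ n) (σ : Equiv.Perm (Fin n)) (hσ : IsInvol σ) :
    RConds n (Rfun σ) := by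
  classical
  have hInv : ∀ a, σ (σ a) = a := by
    intro a
    have := congrArg (fun τ : Equiv.Perm (Fin n) => τ a) hσ
    simpa using this
  have hR : ∀ i j, 1 ≤ i → j ≤ n → Rfun σ i j = T4.cfun σ i j := by
    intro i j hi hj
    unfold Rfun
    split_ifs with h
    · exact T4.rank_blk σ hInv i j h.1 h.2.1.le h.2.2
    · rw [T4.cfun_eq_zero σ (by omega)]
  refine ⟨?_, ?_, ?_⟩
  · intro i j hi hin hj1 hjn hji
    rw [hR i j hi hjn, T4.cfun_eq_zero σ hji]
  · intro i j hi hij hjn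
    rw [hR (i + 1) j (by omega) hjn, hR i j hi hjn, hR i (j - 1) hi (by omega)]
    exact ⟨Finset.card_le_card (T4.pairSet_mono_left σ (by omega)),
      T4.cfun_row_step σ i j,
      Finset.card_le_card (T4.pairSet_mono_right σ (by omega)),
      T4.cfun_col_step σ i j⟩
  · intro i j hi hij hjn h4 h5 h6
    rw [hR i j hi hjn, hR (i + 1) j (by omega) hjn] at h4
    rw [hR i j hi hjn, hR i (j - 1) hi (by omega)] at h5
    rw [hR i j hi hjn, hR (i + 1) (j - 1) (by omega) (by omega)] at h6
    -- extract the row element a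
    obtain ⟨a, haS, haT⟩ := T4.exists_of_card_eq (T4.pairSet_mono_left σ (by omega)) h4
    obtain ⟨b, hbS, hbT⟩ := T4.exists_of_card_eq (T4.pairSet_mono_right σ (by omega)) h5
    rw [T4.mem_pairSet] at haS hbS
    have hav : a.val + 1 = i := by
      by_contra hne
      exact haT (T4.mem_pairSet σ |>.mpr ⟨haS.1, by omega, haS.2.2⟩)
    have hbv : (σ b).val + 1 = j := by
      by_contra hne
      exact hbT (T4.mem_pairSet σ |>.mpr ⟨hbS.1, hbS.2.1, by omega⟩)
    have hsub : T4.pairSet σ (i + 1) (j - 1) ⊆ T4.pairSet σ i j :=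
      (T4.pairSet_mono_right σ (by omega)).trans (T4.pairSet_mono_left σ (by omega))
    have hab : a = b := by
      by_contra hne
      have haT' : a ∉ T4.pairSet σ (i + 1) (j - 1) := by
        rw [T4.mem_pairSet]
        rintro ⟨-, h', -⟩
        omega
      have hbT' : b ∉ T4.pairSet σ (i + 1) (j - 1) := by
        rw [T4.mem_pairSet]
        rintro ⟨-, -, h'⟩
        omega
      have := T4.two_le_card_diff hsub hne (T4.mem_pairSet σ |>.mpr haS)
        (T4.mem_pairSet σ |>.mpr hbS) haT' hbT'
      unfold T4.cfun at h6
      omega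
    subst hab
    -- key facts about a
    have hlt : a.val < (σ a).val := haS.1
    have hσa : σ (σ a) = a := hInv a
    have hj2 : 2 ≤ j := by omega
    -- uniqueness helpers
    have hrow : ∀ c : Fin n, c.val + 1 = i → c = a := fun c hc => Fin.ext (by omega)
    have hcol : ∀ c : Fin n, (σ c).val + 1 = j → c = a := by
      intro c hc
      exact σ.injective (Fin.ext (by omega))
    have hrowj : ∀ c : Fin n, c.val + 1 = j → c = σ a := fun c hc => Fin.ext (by omega)
    have hcoli : ∀ c : Fin n, (σ c).val + 1 = i → c = σ a := by
      intro c hc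
      have h' : σ c = a := Fin.ext (by omega)
      have := congrArg σ h'
      rwa [hInv c] at this
    refine ⟨?_, ?_, ?_, ?_, ?_⟩
    · -- (a) k < j
      intro k hk1 hkj
      rw [hR i k hi (by omega), hR (i + 1) k (by omega) (by omega)]
      unfold T4.cfun
      congr 1
      ext c
      rw [T4.mem_pairSet, T4.mem_pairSet]
      constructor
      · rintro ⟨h1', h2', h3'⟩
        refine ⟨h1', ?_, h3'⟩
        by_contra hc
        have hca : c = a := hrow c (by omega)
        subst hca
        omega
      · rintro ⟨h1', h2', h3'⟩
        exact ⟨h1', by omega, h3'⟩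
    · -- (b) j ≤ k
      intro k hjk hkn
      rw [hR i k hi hkn, hR (i + 1) k (by omega) hkn]
      apply T4.card_eq_succ_of (T4.pairSet_mono_left σ (by omega))
      · exact T4.mem_pairSet σ |>.mpr ⟨haS.1, by omega, by omega⟩
      · rw [T4.mem_pairSet]
        rintro ⟨-, h', -⟩
        omega
      · intro c hc hc'
        rw [T4.mem_pairSet] at hc
        apply hrow
        by_contra hne
        exact hc' (T4.mem_pairSet σ |>.mpr ⟨hc.1, by omega, hc.2.2⟩)
    · -- (c) i < k
      intro k hik hkn
      rw [hR k j (by omega) hjn, hR k (j - 1) (by omega) (by omega)]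
      unfold T4.cfun
      congr 1
      ext c
      rw [T4.mem_pairSet, T4.mem_pairSet]
      constructor
      · rintro ⟨h1', h2', h3'⟩
        refine ⟨h1', h2', ?_⟩
        by_contra hc
        have hca : c = a := hcol c (by omega)
        subst hca
        omega
      · rintro ⟨h1', h2', h3'⟩
        exact ⟨h1', h2', by omega⟩
    · -- (d) k ≤ i
      intro k hk1 hki
      rw [hR k j hk1 hjn, hR k (j - 1) hk1 (by omega)]
      apply T4.card_eq_succ_of (T4.pairSet_mono_right σ (by omega))
      · exact T4.mem_pairSet σ |>.mpr ⟨haS.1, by omega, by omega⟩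
      · rw [T4.mem_pairSet]
        rintro ⟨-, -, h'⟩
        omega
      · intro c hc hc'
        rw [T4.mem_pairSet] at hc
        apply hcol
        by_contra hne
        exact hc' (T4.mem_pairSet σ |>.mpr ⟨hc.1, hc.2.1, by omega⟩)
    · -- (e) both
      intro k hk1 hkn
      constructor
      · rw [hR j k (by omega) hkn, hR (j + 1) k (by omega) hkn]
        unfold T4.cfun
        congr 1
        ext c
        rw [T4.mem_pairSet, T4.mem_pairSet]
        constructor
        · rintro ⟨h1', h2', h3'⟩
          refine ⟨h1', ?_, h3'⟩
          by_contra hc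
          have hca : c = σ a := hrowj c (by omega)
          subst hca
          have h1'' : (σ a).val < (σ (σ a)).val := h1'
          rw [hσa] at h1''
          omega
        · rintro ⟨h1', h2', h3'⟩
          exact ⟨h1', by omega, h3'⟩
      · rw [hR k i hk1 (by omega), hR k (i - 1) hk1 (by omega)]
        unfold T4.cfun
        congr 1
        ext c
        rw [T4.mem_pairSet, T4.mem_pairSet]
        constructor
        · rintro ⟨h1', h2', h3'⟩
          refine ⟨h1', h2', ?_⟩
          by_contra hc
          have hca : c = σ a := hcoli c (by omega)
          subst hca
          have h1'' : (σ a).val < (σ (σ a)).val := h1'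
          rw [hσa] at h1''
          omega
        · rintro ⟨h1', h2', h3'⟩
          exact ⟨h1', h2', by omega⟩
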